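/- Let β ∈ [0,1] and x, y ∈ ℝ with x ≥ 0 and y ≥ 0. Then |log(β·(1+x)^(1−β) + (1−β)·(1+x)^(−β)) − log(β·(1+y)^(1−β) + (1−β)·(1+y)^(−β))| ≤ (β·(1−β)/2)·|x² − y²|. -/

import Mathlib

open Real Set

private lemma Dpos (β t : ℝ) (hβ0 : 0 ≤ β) (hβ1 : β ≤ 1) (ht : 0 ≤ t) :
    0 < β * (1 + t) ^ (1 - β) + (1 - β) * (1 + t) ^ (-β) := by
  have hu : (0:ℝ) < 1 + t := by linarith
  have h1 := Real.rpow_pos_of_pos hu (1 - β)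
  have h2 := Real.rpow_pos_of_pos hu (-β)
  rcases lt_or_eq_of_le hβ1 with h | h
  · have h3 : 0 < (1 - β) * (1 + t) ^ (-β) := mul_pos (by linarith) h2
    nlinarith [mul_nonneg hβ0 h1.le]
  · subst h
    nlinarith

private lemma keyDeriv (β t : ℝ) (hβ0 : 0 ≤ β) (hβ1 : β ≤ 1) (ht : 0 ≤ t) :
    HasDerivAt (fun s => Real.log (β * (1 + s) ^ (1 - β) + (1 - β) * (1 + s) ^ (-β)))
      (β * (1 - β) * t * (1 + t) ^ (-β - 1) /
        (β * (1 + t) ^ (1 - β) + (1 - β) * (1 + t) ^ (-β))) t := by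
  have hu : (0:ℝ) < 1 + t := by linarith
  have h1 : HasDerivAt (fun s : ℝ => 1 + s) 1 t := by
    simpa using (hasDerivAt_id t).const_add (1:ℝ)
  have hp1 : HasDerivAt (fun s : ℝ => (1 + s) ^ (1 - β)) (1 * (1 - β) * (1 + t) ^ (1 - β - 1)) t :=
    h1.rpow_const (Or.inl hu.ne')
  have hp2 : HasDerivAt (fun s : ℝ => (1 + s) ^ (-β)) (1 * (-β) * (1 + t) ^ (-β - 1)) t :=
    h1.rpow_const (Or.inl hu.ne')
  have hD : HasDerivAt (fun s : ℝ => β * (1 + s) ^ (1 - β) + (1 - β) * (1 + s) ^ (-β))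
      (β * (1 * (1 - β) * (1 + t) ^ (1 - β - 1)) + (1 - β) * (1 * (-β) * (1 + t) ^ (-β - 1))) t :=
    (hp1.const_mul β).add (hp2.const_mul (1 - β))
  have hDpos := Dpos β t hβ0 hβ1 ht
  have hlog := hD.log hDpos.ne'
  convert hlog using 1
  have he : (1 - β - 1 : ℝ) = -β := by ring
  have hsplit : (1 + t) ^ (-β) = (1 + t) ^ (-β - 1) * (1 + t) := by
    rw [← Real.rpow_add_one hu.ne' (-β - 1)]
    ring_nf
  rw [he]
  congr 1
  linear_combination (-(β * (1 - β))) * hsplit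

theorem log_sum_rpow_lipschitz_nonneg (β x y : ℝ) (hβ0 : 0 ≤ β) (hβ1 : β ≤ 1)
    (hx : 0 ≤ x) (hy : 0 ≤ y) :
    |Real.log (β * (1 + x) ^ (1 - β) + (1 - β) * (1 + x) ^ (-β)) -
        Real.log (β * (1 + y) ^ (1 - β) + (1 - β) * (1 + y) ^ (-β))| ≤
      β * (1 - β) / 2 * |x ^ 2 - y ^ 2| := by
  set f : ℝ → ℝ := fun s => Real.log (β * (1 + s) ^ (1 - β) + (1 - β) * (1 + s) ^ (-β)) with hf
  set c : ℝ := β * (1 - β) / 2 with hc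
  set f' : ℝ → ℝ := fun t => β * (1 - β) * t * (1 + t) ^ (-β - 1) /
        (β * (1 + t) ^ (1 - β) + (1 - β) * (1 + t) ^ (-β)) with hf'
  have hderiv : ∀ t : ℝ, 0 ≤ t → HasDerivAt f (f' t) t := fun t ht =>
    keyDeriv β t hβ0 hβ1 ht
  have hf'nonneg : ∀ t : ℝ, 0 ≤ t → 0 ≤ f' t := by
    intro t ht
    have hu : (0:ℝ) < 1 + t := by linarith
    have hD := Dpos β t hβ0 hβ1 ht
    have h2 := Real.rpow_pos_of_pos hu (-β - 1)
    exact div_nonneg (mul_nonneg (mul_nonneg (mul_nonneg hβ0 (by linarith)) ht) h2.le) hD.le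
  have hf'le : ∀ t : ℝ, 0 ≤ t → f' t ≤ β * (1 - β) * t := by
    intro t ht
    have hu : (0:ℝ) < 1 + t := by linarith
    have hD := Dpos β t hβ0 hβ1 ht
    have hu1 : (1:ℝ) ≤ 1 + t := by linarith
    have hm1 : (1 + t) ^ (-β - 1) ≤ (1 + t) ^ (-β) :=
      Real.rpow_le_rpow_of_exponent_le hu1 (by linarith)
    have hm2 : (1 + t) ^ (-β) ≤ (1 + t) ^ (1 - β) :=
      Real.rpow_le_rpow_of_exponent_le hu1 (by linarith)
    have hmD : (1 + t) ^ (-β - 1) ≤ β * (1 + t) ^ (1 - β) + (1 - β) * (1 + t) ^ (-β) := by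
      nlinarith
    rw [hf', div_le_iff₀ hD]
    have hnn : 0 ≤ β * (1 - β) * t := mul_nonneg (mul_nonneg hβ0 (by linarith)) ht
    calc β * (1 - β) * t * (1 + t) ^ (-β - 1)
        ≤ β * (1 - β) * t * (β * (1 + t) ^ (1 - β) + (1 - β) * (1 + t) ^ (-β)) :=
          mul_le_mul_of_nonneg_left hmD hnn
      _ = _ := by ring
  -- continuity / differentiability on Ici 0
  have hcont : ContinuousOn f (Ici 0) := fun t ht =>
    ((hderiv t ht).continuousAt).continuousWithinAt
  have hdiff : DifferentiableOn ℝ f (interior (Ici (0:ℝ))) := by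
    rw [interior_Ici]
    exact fun t ht => ((hderiv t (le_of_lt ht)).differentiableAt).differentiableWithinAt
  have hmono : MonotoneOn f (Ici 0) := by
    apply monotoneOn_of_deriv_nonneg (convex_Ici 0) hcont hdiff
    intro t ht
    rw [interior_Ici] at ht
    rw [(hderiv t ht.le).deriv]
    exact hf'nonneg t ht.le
  set g : ℝ → ℝ := fun s => c * s ^ 2 - f s with hg
  have hgmono : MonotoneOn g (Ici 0) := by
    have hgd : ∀ t : ℝ, 0 ≤ t → HasDerivAt g (c * (2 * t) - f' t) t := by
      intro t ht
      have h0 : HasDerivAt (fun y => c * y ^ 2 - f y) _ t := ((hasDerivAt_pow 2 t).const_mul c).sub (hderiv t ht)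
      convert h0 using 1
      norm_num
    apply monotoneOn_of_deriv_nonneg (convex_Ici 0)
    · exact fun t ht => ((hgd t ht).continuousAt).continuousWithinAt
    · rw [interior_Ici]
      exact fun t ht => ((hgd t (le_of_lt ht)).differentiableAt).differentiableWithinAt
    · intro t ht
      rw [interior_Ici] at ht
      rw [(hgd t ht.le).deriv]
      have := hf'le t ht.le
      have : f' t ≤ c * (2 * t) := by rw [hc]; linarith
      linarith
  -- finish
  have main : ∀ a b : ℝ, 0 ≤ a → 0 ≤ b → a ≤ b → |f b - f a| ≤ c * |b ^ 2 - a ^ 2| := by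
    intro a b ha hb hab
    have h1 : f a ≤ f b := hmono ha hb hab
    have h2 : g a ≤ g b := hgmono ha hb hab
    have hsq : a ^ 2 ≤ b ^ 2 := by nlinarith
    rw [abs_of_nonneg (by linarith), abs_of_nonneg (by linarith)]
    rw [hg] at h2
    simp only at h2
    linarith
  rcases le_total x y with h | h
  · rw [abs_sub_comm, abs_sub_comm (x ^ 2)]
    exact main x y hx hy h
  · exact main y x hy hx h
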